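/- Let k ≥ 1 be an integer, j ≥ 0 an integer, and s a real number with 0 < s < k. Then the j-th iterated derivative at s of the function x ↦ Γ'(x)/Γ(x) − Γ'(k−x)/Γ(k−x) equals j! · Σ_{r=0}^{∞} ( (−1)^{j+1}/(s+r)^{j+1} + 1/(r+k−s)^{j+1} ). -/

import Mathlib

open Real Filter Finset Set

private lemma summable_aux' {c : ℝ} (hc : 0 < c) {p : ℕ} (hp : 2 ≤ p) :
    Summable (fun r : ℕ => 1 / (c + r) ^ p) := by
  rw [← summable_nat_add_iff 1]
  have h2 : Summable (fun n : ℕ => 1 / ((n : ℝ) + 1) ^ 2) := by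
    have := (summable_nat_add_iff (f := fun n : ℕ => 1 / (n : ℝ) ^ 2) 1).mpr
      (Real.summable_one_div_nat_pow.mpr one_lt_two)
    simpa using this
  apply h2.of_nonneg_of_le (fun n => by positivity)
  intro n
  have hn1 : (1 : ℝ) ≤ (n : ℝ) + 1 := by
    have := Nat.cast_nonneg (α := ℝ) n; linarith
  have key : ((n : ℝ) + 1) ^ 2 ≤ (c + ((n + 1 : ℕ) : ℝ)) ^ p := by
    calc ((n : ℝ) + 1) ^ 2 ≤ ((n : ℝ) + 1) ^ p := pow_le_pow_right₀ hn1 hp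
      _ ≤ (c + ((n + 1 : ℕ) : ℝ)) ^ p := by
          apply pow_le_pow_left₀ (by positivity)
          push_cast; linarith
  exact one_div_le_one_div_of_le (by positivity) key

private lemma hasDerivAt_v' (K : ℝ) (p r : ℕ) {x : ℝ} (hx : 0 < x) (hxK : x < K) :
    HasDerivAt (fun y : ℝ => (-1 : ℝ) ^ (p + 1) / (y + r) ^ (p + 1) + 1 / ((r : ℝ) + K - y) ^ (p + 1))
      (((p : ℝ) + 1) * ((-1 : ℝ) ^ (p + 2) / (x + r) ^ (p + 2) + 1 / ((r : ℝ) + K - x) ^ (p + 2))) x := by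
  have hr : (0:ℝ) ≤ (r:ℝ) := Nat.cast_nonneg r
  have hxr : 0 < x + r := by positivity
  have hKr : 0 < (r : ℝ) + K - x := by linarith
  have h1 : HasDerivAt (fun y : ℝ => ((y + (r : ℝ)) ^ (p + 1))⁻¹)
      (-(((p : ℕ) + 1 : ℝ) * (x + r) ^ p * 1) / ((x + r) ^ (p + 1)) ^ 2) x := by
    have := (((hasDerivAt_id x).add_const (r : ℝ)).fun_pow (p + 1)).fun_inv
      (pow_ne_zero _ hxr.ne')
    simpa using this
  have h2 : HasDerivAt (fun y : ℝ => (((r : ℝ) + K - y) ^ (p + 1))⁻¹)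
      (-(((p : ℕ) + 1 : ℝ) * ((r : ℝ) + K - x) ^ p * (-1)) / (((r : ℝ) + K - x) ^ (p + 1)) ^ 2) x := by
    have hlin : HasDerivAt (fun y : ℝ => (r : ℝ) + K - y) (-1) x := by
      simpa using (hasDerivAt_id x).const_sub ((r : ℝ) + K)
    have := (hlin.fun_pow (p + 1)).fun_inv (pow_ne_zero _ hKr.ne')
    simpa using this
  have h3 := (h1.const_mul ((-1 : ℝ) ^ (p + 1))).fun_add h2
  have hfun : (fun y : ℝ => (-1 : ℝ) ^ (p + 1) * ((y + (r : ℝ)) ^ (p + 1))⁻¹ + (((r : ℝ) + K - y) ^ (p + 1))⁻¹)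
      = (fun y : ℝ => (-1 : ℝ) ^ (p + 1) / (y + r) ^ (p + 1) + 1 / ((r : ℝ) + K - y) ^ (p + 1)) := by
    funext y; rw [div_eq_mul_inv, one_div]
  rw [hfun] at h3
  refine HasDerivAt.congr_deriv h3 ?_
  have e3 : (-1:ℝ)^(p+2) = -(-1:ℝ)^(p+1) := by ring
  field_simp
  ring

private lemma v_bound' (K : ℝ) (q : ℕ) {a b y : ℝ} (ha : 0 < a) (hbK : b < K)
    (hy : y ∈ Ioo a b) (r : ℕ) :
    ‖(-1 : ℝ) ^ q / (y + r) ^ q + 1 / ((r : ℝ) + K - y) ^ q‖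
      ≤ 1 / (a + r) ^ q + 1 / ((K - b) + r) ^ q := by
  obtain ⟨hya, hyb⟩ := hy
  have hr : (0:ℝ) ≤ (r:ℝ) := Nat.cast_nonneg r
  have hyr : 0 < y + r := by linarith
  have hKy : 0 < (r : ℝ) + K - y := by linarith
  have har : 0 < a + r := by linarith
  have hKb : 0 < (K - b) + r := by linarith
  calc ‖(-1 : ℝ) ^ q / (y + r) ^ q + 1 / ((r : ℝ) + K - y) ^ q‖
      ≤ ‖(-1 : ℝ) ^ q / (y + r) ^ q‖ + ‖1 / ((r : ℝ) + K - y) ^ q‖ := norm_add_le _ _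
    _ = 1 / (y + r) ^ q + 1 / ((r : ℝ) + K - y) ^ q := by
        rw [norm_div, norm_pow, norm_neg, norm_one, one_pow, norm_div, norm_one, norm_pow,
          Real.norm_eq_abs, Real.norm_eq_abs, abs_of_pos hyr, abs_of_pos (pow_pos hKy q)]
    _ ≤ 1 / (a + r) ^ q + 1 / ((K - b) + r) ^ q := by
        gcongr <;> linarith

private lemma summable_v (K : ℝ) (q : ℕ) (hq : 1 ≤ q) {y : ℝ} (hy0 : 0 < y) (hyK : y < K) :
    Summable (fun r : ℕ => (-1 : ℝ) ^ q / (y + r) ^ q + 1 / ((r : ℝ) + K - y) ^ q) := by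
  rcases eq_or_lt_of_le hq with h1 | h2
  · subst h1
    apply Summable.of_norm
    have hc : 0 < min y (K - y) := lt_min hy0 (by linarith)
    apply Summable.of_nonneg_of_le (fun r => norm_nonneg _) _
      ((summable_aux' hc le_rfl).mul_left K)
    intro r
    have hr : (0:ℝ) ≤ r := Nat.cast_nonneg r
    have hd1 : 0 < y + r := by linarith
    have hd2 : 0 < (r:ℝ) + K - y := by linarith
    have hid : (-1:ℝ)^1/(y+r)^1 + 1/((r:ℝ)+K-y)^1 = (2*y - K)/((y+r)*((r:ℝ)+K-y)) := by
      field_simp; ring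
    rw [hid, norm_div, Real.norm_eq_abs, Real.norm_eq_abs]
    have hnum : |2*y - K| ≤ K := by rw [abs_le]; constructor <;> linarith
    have hcr : 0 < min y (K-y) + (r:ℝ) := by
      have := lt_min hy0 (by linarith : (0:ℝ) < K - y); linarith
    have hden2 : (min y (K-y) + (r:ℝ))^2 ≤ (y+r)*((r:ℝ)+K-y) := by
      have l1 : min y (K-y) + (r:ℝ) ≤ y + r := by have := min_le_left y (K-y); linarith
      have l2 : min y (K-y) + (r:ℝ) ≤ (r:ℝ) + K - y := by have := min_le_right y (K-y); linarith
      calc (min y (K-y)+(r:ℝ))^2 = (min y (K-y)+(r:ℝ))*(min y (K-y)+(r:ℝ)) := sq _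
        _ ≤ (y+r)*((r:ℝ)+K-y) := mul_le_mul l1 l2 hcr.le (by linarith)
    rw [abs_of_pos (mul_pos hd1 hd2), mul_one_div]
    exact div_le_div₀ (by linarith) hnum (by positivity) hden2
  · apply Summable.of_norm
    have ha : (0:ℝ) < y/2 := by linarith
    have hb : (y + K)/2 < K := by linarith
    refine Summable.of_nonneg_of_le (fun r => norm_nonneg _)
      (fun r => v_bound' K q ha hb ⟨by linarith, by linarith⟩ r) ?_
    exact (summable_aux' ha h2).add (summable_aux' (by linarith : (0:ℝ) < K - (y+K)/2) h2)

private lemma hasDerivAt_V (K : ℝ) (p : ℕ) {x : ℝ} (hx : 0 < x) (hxK : x < K) :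
    HasDerivAt (fun y : ℝ => ∑' r : ℕ, ((-1 : ℝ) ^ (p + 1) / (y + r) ^ (p + 1) + 1 / ((r : ℝ) + K - y) ^ (p + 1)))
      (((p : ℝ) + 1) * ∑' r : ℕ, ((-1 : ℝ) ^ (p + 2) / (x + r) ^ (p + 2) + 1 / ((r : ℝ) + K - x) ^ (p + 2))) x := by
  set a := x / 2 with ha_def
  set b := (x + K) / 2 with hb_def
  have ha : 0 < a := by simp only [ha_def]; linarith
  have hbK : b < K := by simp only [hb_def]; linarith
  have hmem : x ∈ Ioo a b := ⟨by simp only [ha_def]; linarith, by simp only [hb_def]; linarith⟩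
  rw [← tsum_mul_left]
  apply hasDerivAt_of_tendstoUniformlyOn (isOpen_Ioo (a := a) (b := b))
    (f := fun n y => ∑ r ∈ Finset.range n,
      ((-1 : ℝ) ^ (p + 1) / (y + r) ^ (p + 1) + 1 / ((r : ℝ) + K - y) ^ (p + 1)))
    (f' := fun n y => ∑ r ∈ Finset.range n,
      (((p : ℝ) + 1) * ((-1 : ℝ) ^ (p + 2) / (y + r) ^ (p + 2) + 1 / ((r : ℝ) + K - y) ^ (p + 2))))
    (l := atTop) (hx := hmem)
  · apply tendstoUniformlyOn_tsum_nat
      (u := fun r => ((p : ℝ) + 1) * (1 / (a + r) ^ (p + 2) + 1 / ((K - b) + r) ^ (p + 2)))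
    · exact ((summable_aux' ha (by omega)).add (summable_aux' (by linarith) (by omega))).mul_left _
    · intro r y hy
      rw [norm_mul]
      have hnp : ‖((p:ℝ)+1)‖ = (p:ℝ)+1 := by
        rw [Real.norm_eq_abs, abs_of_pos (by positivity)]
      rw [hnp]
      exact mul_le_mul_of_nonneg_left (v_bound' K (p+2) ha hbK hy r) (by positivity)
  · filter_upwards with n y hy
    exact HasDerivAt.fun_sum fun r _ => hasDerivAt_v' K p r (by linarith [hy.1]) (by linarith [hy.2])
  · intro y hy
    exact (summable_v K (p+1) (by omega) (by linarith [hy.1])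
      (by linarith [hy.2])).hasSum.tendsto_sum_nat

private lemma hasDerivAt_lgs (n : ℕ) {x : ℝ} (hx : 0 < x) :
    HasDerivAt (fun y => Real.BohrMollerup.logGammaSeq y n)
      (Real.log n - ∑ m ∈ Finset.range (n + 1), 1 / (x + m)) x := by
  have h1 : HasDerivAt (fun y : ℝ => y * Real.log n + Real.log (n.factorial : ℝ)) (Real.log n) x := by
    simpa using ((hasDerivAt_id x).mul_const (Real.log n)).add_const (Real.log (n.factorial : ℝ))
  have h2 : HasDerivAt (fun y : ℝ => ∑ m ∈ Finset.range (n + 1), Real.log (y + m))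
      (∑ m ∈ Finset.range (n + 1), 1 / (x + m)) x := by
    apply HasDerivAt.fun_sum
    intro m _
    have hxm : (0:ℝ) < x + m := by positivity
    simpa [one_div] using ((hasDerivAt_id x).add_const (m : ℝ)).log hxm.ne'
  have := h1.fun_sub h2
  simpa only [Real.BohrMollerup.logGammaSeq] using this

private lemma v_bound_one (K : ℝ) {a b y : ℝ} (ha : 0 < a) (hbK : b < K)
    (hy : y ∈ Ioo a b) (m : ℕ) :
    ‖(-1 : ℝ) ^ 1 / (y + m) ^ 1 + 1 / ((m : ℝ) + K - y) ^ 1‖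
      ≤ K * (1 / (min a (K - b) + m) ^ 2) := by
  obtain ⟨hya, hyb⟩ := hy
  have hr : (0:ℝ) ≤ (m:ℝ) := Nat.cast_nonneg m
  have hd1 : 0 < y + m := by linarith
  have hd2 : 0 < (m:ℝ) + K - y := by linarith
  have hc : 0 < min a (K - b) := lt_min ha (by linarith)
  have hcr : 0 < min a (K - b) + (m:ℝ) := by linarith
  have hid : (-1:ℝ)^1/(y+m)^1 + 1/((m:ℝ)+K-y)^1 = (2*y - K)/((y+m)*((m:ℝ)+K-y)) := by
    field_simp; ring
  rw [hid, norm_div, Real.norm_eq_abs, Real.norm_eq_abs, abs_of_pos (mul_pos hd1 hd2),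
    mul_one_div]
  have hnum : |2*y - K| ≤ K := by rw [abs_le]; constructor <;> linarith
  have hden2 : (min a (K-b) + (m:ℝ))^2 ≤ (y+m)*((m:ℝ)+K-y) := by
    have l1 : min a (K-b) + (m:ℝ) ≤ y + m := by have := min_le_left a (K-b); linarith
    have l2 : min a (K-b) + (m:ℝ) ≤ (m:ℝ) + K - y := by have := min_le_right a (K-b); linarith
    calc (min a (K-b)+(m:ℝ))^2 = (min a (K-b)+(m:ℝ))*(min a (K-b)+(m:ℝ)) := sq _
      _ ≤ (y+m)*((m:ℝ)+K-y) := mul_le_mul l1 l2 hcr.le (by linarith)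
  exact div_le_div₀ (by linarith) hnum (by positivity) hden2

private lemma digamma_base (K : ℝ) {x : ℝ} (hx : 0 < x) (hxK : x < K) :
    deriv Real.Gamma x / Real.Gamma x - deriv Real.Gamma (K - x) / Real.Gamma (K - x)
      = ∑' r : ℕ, ((-1 : ℝ) ^ 1 / (x + r) ^ 1 + 1 / ((r : ℝ) + K - x) ^ 1) := by
  set a := x / 2 with ha_def
  set b := (x + K) / 2 with hb_def
  have ha : 0 < a := by simp only [ha_def]; linarith
  have hbK : b < K := by simp only [hb_def]; linarith
  have hmem : x ∈ Ioo a b := ⟨by simp only [ha_def]; linarith, by simp only [hb_def]; linarith⟩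
  have hc : 0 < min a (K - b) := lt_min ha (by linarith)
  have stepA : HasDerivAt (fun y : ℝ => Real.log (Real.Gamma y) + Real.log (Real.Gamma (K - y)))
      (∑' r : ℕ, ((-1 : ℝ) ^ 1 / (x + r) ^ 1 + 1 / ((r : ℝ) + K - x) ^ 1)) x := by
    apply hasDerivAt_of_tendstoUniformlyOn (isOpen_Ioo (a := a) (b := b)) (l := atTop)
      (f := fun n y => Real.BohrMollerup.logGammaSeq y n + Real.BohrMollerup.logGammaSeq (K - y) n)
      (f' := fun n y => ∑ m ∈ Finset.range (n + 1),
        ((-1 : ℝ) ^ 1 / (y + m) ^ 1 + 1 / ((m : ℝ) + K - y) ^ 1))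
      (hx := hmem)
    · have h := tendstoUniformlyOn_tsum_nat
        (u := fun m : ℕ => K * (1 / (min a (K - b) + m) ^ 2))
        (f := fun m y => (-1 : ℝ) ^ 1 / (y + m) ^ 1 + 1 / ((m : ℝ) + K - y) ^ 1)
        ((summable_aux' hc le_rfl).mul_left K)
        (fun m y hy => v_bound_one K ha hbK hy m)
      intro u hu
      exact (tendsto_add_atTop_nat 1).eventually (h u hu)
    · filter_upwards with n y hy
      obtain ⟨hya, hyb⟩ := hy
      have hy0 : 0 < y := lt_trans ha hya
      have hyK : y < K := lt_trans hyb hbK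
      have d1 := hasDerivAt_lgs n hy0
      have d2 := (hasDerivAt_lgs n (by linarith : (0:ℝ) < K - y)).comp y
        ((hasDerivAt_id y).const_sub K)
      have hsum := d1.fun_add d2
      convert hsum using 1
      · rfl
      rw [Finset.sum_add_distrib]
      have e1 : ∑ m ∈ Finset.range (n+1), (-1:ℝ)^1/(y+m)^1
          = -∑ m ∈ Finset.range (n+1), 1/(y+m) := by
        rw [← Finset.sum_neg_distrib]
        exact Finset.sum_congr rfl fun m _ => by ring
      have e2 : ∑ m ∈ Finset.range (n+1), 1/((m:ℝ)+K-y)^1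
          = ∑ m ∈ Finset.range (n+1), 1/((K-y)+m) := by
        exact Finset.sum_congr rfl fun m _ => by ring_nf
      rw [e1, e2]
      ring
    · intro y hy
      obtain ⟨hya, hyb⟩ := hy
      have hy0 : 0 < y := lt_trans ha hya
      exact (Real.BohrMollerup.tendsto_log_gamma hy0).add
        (Real.BohrMollerup.tendsto_log_gamma (by linarith [hyb, hbK] : (0:ℝ) < K - y))
  have hKx : 0 < K - x := by linarith
  have hne1 : ∀ m : ℕ, x ≠ -(m:ℝ) := fun m => by
    have : -(m:ℝ) ≤ 0 := neg_nonpos.mpr (Nat.cast_nonneg m)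
    intro h; linarith [h ▸ hx]
  have hne2 : ∀ m : ℕ, K - x ≠ -(m:ℝ) := fun m => by
    have : -(m:ℝ) ≤ 0 := neg_nonpos.mpr (Nat.cast_nonneg m)
    intro h; linarith [h ▸ hKx]
  have hG1 : HasDerivAt Real.Gamma (deriv Real.Gamma x) x :=
    (Real.differentiableAt_Gamma hne1).hasDerivAt
  have hG2 : HasDerivAt Real.Gamma (deriv Real.Gamma (K - x)) (K - x) :=
    (Real.differentiableAt_Gamma hne2).hasDerivAt
  have hlog1 := hG1.log (Real.Gamma_pos_of_pos hx).ne'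
  have hcomp : HasDerivAt (fun y : ℝ => Real.Gamma (K - y)) (deriv Real.Gamma (K - x) * (-1)) x :=
    hG2.comp x ((hasDerivAt_id x).const_sub K)
  have hlog2 := hcomp.log (Real.Gamma_pos_of_pos hKx).ne'
  have stepB := hlog1.add hlog2
  have := stepB.unique stepA
  rw [← this]
  ring

/-- Series expansion of the iterated derivatives of the digamma difference
(Equation (5.15.1) of [NIST] applied to `Ψ_{j+1}`): for `0 < s < k`,
`(d/ds)^j (Γ'(s)/Γ(s) − Γ'(k−s)/Γ(k−s)) = j! Σ_{r≥0} ((−1)^{j+1}/(s+r)^{j+1} + 1/(r+k−s)^{j+1})`. -/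
theorem iteratedDeriv_digamma_diff_eq_tsum
    (k : ℕ) (hk : 1 ≤ k) (j : ℕ) (s : ℝ) (hs0 : 0 < s) (hsk : s < (k : ℝ)) :
    iteratedDeriv j
      (fun x : ℝ => deriv Real.Gamma x / Real.Gamma x -
        deriv Real.Gamma ((k : ℝ) - x) / Real.Gamma ((k : ℝ) - x)) s =
    (Nat.factorial j : ℝ) * ∑' r : ℕ,
      ((-1 : ℝ) ^ (j + 1) / (s + r) ^ (j + 1) + 1 / ((r : ℝ) + k - s) ^ (j + 1)) := by
  induction j generalizing s with
  | zero =>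
    rw [iteratedDeriv_zero]
    simpa using digamma_base (k : ℝ) hs0 hsk
  | succ j ih =>
    rw [iteratedDeriv_succ]
    have hev : iteratedDeriv j
        (fun x : ℝ => deriv Real.Gamma x / Real.Gamma x -
          deriv Real.Gamma ((k : ℝ) - x) / Real.Gamma ((k : ℝ) - x))
        =ᶠ[nhds s] fun y => (Nat.factorial j : ℝ) * ∑' r : ℕ,
          ((-1 : ℝ) ^ (j + 1) / (y + r) ^ (j + 1) + 1 / ((r : ℝ) + k - y) ^ (j + 1)) := by
      filter_upwards [Ioo_mem_nhds hs0 hsk] with y hy using ih y hy.1 hy.2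
    rw [hev.deriv_eq]
    have hd := (hasDerivAt_V (k : ℝ) j hs0 hsk).const_mul ((Nat.factorial j : ℝ))
    rw [hd.deriv]
    have hexp : j + 1 + 1 = j + 2 := rfl
    rw [Nat.factorial_succ, hexp]
    push_cast
    ring
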